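/- Let A be a unital C*-algebra and let u ∈ A be a unitary element (u*u = uu* = 1). Then ‖1 + u − u²‖ < 3. -/

import Mathlib

open Polynomial in
/-- For a unitary element `u` of a unital C*-algebra, `‖1 + u - u²‖ < 3`. -/
theorem stmt18 {A : Type*} [NormedRing A] [StarRing A] [CStarRing A] [NormedAlgebra ℂ A]
    [CompleteSpace A] [StarModule ℂ A] (u : A)
    (h1 : star u * u = 1) (h2 : u * star u = 1) :
    ‖1 + u - u ^ 2‖ < 3 := by
  rcases subsingleton_or_nontrivial A with hT | hT
  · simp [Subsingleton.elim (1 + u - u ^ 2 : A) 0]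
  letI : CStarAlgebra A := { }
  set a : A := 1 + u - u ^ 2 with ha
  -- `a` is normal
  have hc : Commute u (star u) := h2.trans h1.symm
  have huy : Commute u (1 + star u - star u ^ 2) :=
    ((Commute.one_right u).add_right hc).sub_right (hc.pow_right 2)
  haveI hn : IsStarNormal a := by
    constructor
    have : Commute a (star a) := by
      rw [ha]
      simp only [star_sub, star_add, star_one, star_pow]
      exact ((Commute.one_left _).add_left huy).sub_left (huy.pow_left 2)
    exact this.symm
  -- every element of the spectrum of `a` has norm at most `√5`
  have key : ∀ z ∈ spectrum ℂ a, ‖z‖ ≤ Real.sqrt 5 := by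
    intro z hz
    have hspec : spectrum ℂ a = (fun k => Polynomial.eval k (1 + X - X ^ 2)) '' spectrum ℂ u := by
      have := spectrum.map_polynomial_aeval_of_nonempty u (1 + X - X ^ 2 : ℂ[X])
        (spectrum.nonempty u)
      simpa [Polynomial.aeval_def, Polynomial.eval₂_add, Polynomial.eval₂_sub] using this
    rw [hspec] at hz
    obtain ⟨w, hw, rfl⟩ := hz
    have hwu : ‖w‖ = 1 := by
      have := spectrum.subset_circle_of_unitary (Unitary.mem_iff.mpr ⟨h1, h2⟩) hw
      simpa [Metric.mem_sphere] using this
    have hww : (starRingEnd ℂ) w * w = 1 := by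
      rw [mul_comm, Complex.mul_conj, Complex.normSq_eq_norm_sq, hwu]
      norm_num
    simp only [Polynomial.eval_add, Polynomial.eval_sub, Polynomial.eval_one, Polynomial.eval_X,
      Polynomial.eval_pow]
    have hrw : ‖1 + w - w ^ 2‖ = ‖1 + ((starRingEnd ℂ) w - w)‖ := by
      have : (starRingEnd ℂ) w * (1 + w - w ^ 2) = 1 + ((starRingEnd ℂ) w - w) := by
        have : (starRingEnd ℂ) w * (1 + w - w ^ 2)
            = (starRingEnd ℂ) w + (starRingEnd ℂ) w * w - ((starRingEnd ℂ) w * w) * w := by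
          ring
        rw [this, hww]; ring
      calc ‖1 + w - w ^ 2‖ = ‖(starRingEnd ℂ) w‖ * ‖1 + w - w ^ 2‖ := by
            rw [RCLike.norm_conj, hwu, one_mul]
        _ = ‖(starRingEnd ℂ) w * (1 + w - w ^ 2)‖ := (norm_mul _ _).symm
        _ = ‖1 + ((starRingEnd ℂ) w - w)‖ := by rw [this]
    rw [hrw]
    have him : (starRingEnd ℂ) w - w = -((2 * w.im : ℝ) * Complex.I) := by
      rw [← neg_sub, Complex.sub_conj]
    rw [him]
    have hnorm : ‖(1 : ℂ) + -((2 * w.im : ℝ) * Complex.I)‖ ^ 2 = 1 + (2 * w.im) ^ 2 := by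
      rw [Complex.sq_norm, Complex.normSq_apply]
      simp
      ring
    have him1 : |w.im| ≤ 1 := by
      have := Complex.abs_im_le_norm w
      rwa [hwu] at this
    have h5 : ‖(1 : ℂ) + -((2 * w.im : ℝ) * Complex.I)‖ ^ 2 ≤ 5 := by
      rw [hnorm]
      nlinarith [sq_abs w.im, him1, abs_nonneg w.im]
    calc ‖(1 : ℂ) + -((2 * w.im : ℝ) * Complex.I)‖
        = Real.sqrt (‖(1 : ℂ) + -((2 * w.im : ℝ) * Complex.I)‖ ^ 2) := by
          rw [Real.sqrt_sq (norm_nonneg _)]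
      _ ≤ Real.sqrt 5 := Real.sqrt_le_sqrt h5
  -- the norm equals the spectral radius, which is at most `√5 < 3`
  have hsr := IsStarNormal.spectralRadius_eq_nnnorm a
  have hle : ‖a‖ ≤ Real.sqrt 5 := by
    have h5 : (0 : ℝ) ≤ Real.sqrt 5 := Real.sqrt_nonneg 5
    have : spectralRadius ℂ a ≤ ENNReal.ofReal (Real.sqrt 5) := by
      refine iSup₂_le fun z hz => ?_
      have := key z hz
      rw [← ENNReal.ofReal_coe_nnreal]
      exact ENNReal.ofReal_le_ofReal (by simpa [coe_nnnorm] using this)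
    rw [hsr] at this
    have := ENNReal.toReal_mono (by simp) this
    simpa [ENNReal.toReal_ofReal h5, coe_nnnorm] using this
  calc ‖a‖ ≤ Real.sqrt 5 := hle
    _ < 3 := by
      rw [show (3 : ℝ) = Real.sqrt 9 by rw [show (9:ℝ) = 3^2 by norm_num, Real.sqrt_sq]; norm_num]
      exact Real.sqrt_lt_sqrt (by norm_num) (by norm_num)
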